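/- Let q be an annular link state on Z/n with t defects, and let p be the link state obtained by rotating q by one place (i and j connected in q iff i+1 and j+1 connected in p, indices mod n). Then for each vertex i, either i is a defect of q, or i and i+1 lie in the same connected component of the pair graph Γ(q,p). -/

import Mathlib

open scoped Classical

/-- `k` lies in the open cyclic interval `(i, j)` of `ZMod n`. -/
def cyclicBetween (n : ℕ) [NeZero n] (i j k : ZMod n) : Prop :=
  ∃ m : ℕ, 0 < m ∧ m < (j - i).val ∧ k = i + (m : ZMod n)

/-- An annular link state on `ZMod n`: a partition into parts of size 1 (defects) and 2
(connections, recorded in `pairs`) such that whenever `i` and `j` are connected, the open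
cyclic intervals `(i,j)` and `(j,i)` are unions of parts, and all defects lie in `(i,j)`
or all lie in `(j,i)`. -/
structure AnnularLS (n : ℕ) [NeZero n] where
  pairs : Finset (Finset (ZMod n))
  card_two : ∀ s ∈ pairs, s.card = 2
  disj : ∀ s ∈ pairs, ∀ t ∈ pairs, s ≠ t → Disjoint s t
  interval_closed : ∀ s ∈ pairs, ∀ i ∈ s, ∀ j ∈ s, i ≠ j →
    ∀ t ∈ pairs, ∀ k ∈ t, ∀ l ∈ t,
      cyclicBetween n i j k → cyclicBetween n i j l
  defects_one_side : ∀ s ∈ pairs, ∀ i ∈ s, ∀ j ∈ s, i ≠ j →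
    (∀ d : ZMod n, (∀ t ∈ pairs, d ∉ t) → cyclicBetween n i j d) ∨
    (∀ d : ZMod n, (∀ t ∈ pairs, d ∉ t) → cyclicBetween n j i d)

/-- The defects of an annular link state. -/
noncomputable def AnnularLS.defects {n : ℕ} [NeZero n] (q : AnnularLS n) :
    Finset (ZMod n) :=
  Finset.univ.filter (fun i => ∀ s ∈ q.pairs, i ∉ s)

/-- The pair graph of two link states: `i` and `j` are adjacent if some connection of one
of the two link states joins them. -/
def pairGraph (n : ℕ) [NeZero n] (q p : AnnularLS n) : SimpleGraph (ZMod n) :=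
  SimpleGraph.fromRel (fun i j => ∃ s ∈ q.pairs ∪ p.pairs, i ∈ s ∧ j ∈ s)

set_option linter.unusedSectionVars false

section Helpers
variable {n : ℕ} [NeZero n]

lemma cast_inj' {x : ZMod n} {a b : ℕ} (ha : a < n) (hb : b < n)
    (h : x + (a : ZMod n) = x + (b : ZMod n)) : a = b := by
  have h2 : (a : ZMod n) = (b : ZMod n) := add_left_cancel h
  have := congrArg ZMod.val h2
  rwa [ZMod.val_cast_of_lt ha, ZMod.val_cast_of_lt hb] at this

lemma eq_add_val (x y : ZMod n) : y = x + (((y - x).val : ℕ) : ZMod n) := by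
  rw [ZMod.natCast_rightInverse (y - x)]; ring

lemma cb_not_both {i j k : ZMod n} (hij : i ≠ j)
    (h1 : cyclicBetween n i j k) (h2 : cyclicBetween n j i k) : False := by
  obtain ⟨a, ha0, hav, hka⟩ := h1
  obtain ⟨b, hb0, hbv, hkb⟩ := h2
  have hv : (j - i).val < n := ZMod.val_lt _
  have hji : j - i ≠ 0 := sub_ne_zero.mpr hij.symm
  have hneg : (i - j).val = n - (j - i).val := by
    have h3 : i - j = -(j - i) := by ring
    rw [h3, ZMod.neg_val]; simp [hji]
  rw [hneg] at hbv
  have hj : j = i + (((j - i).val : ℕ) : ZMod n) := eq_add_val i j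
  have heq : i + (a : ZMod n) = i + (((j - i).val + b : ℕ) : ZMod n) := by
    rw [Nat.cast_add, ← add_assoc, ← hj, ← hkb, hka]
  have := cast_inj' (lt_trans hav hv) (by omega) heq
  omega

lemma adj_q (q p : AnnularLS n) {s : Finset (ZMod n)} {a b : ZMod n}
    (hs : s ∈ q.pairs) (ha : a ∈ s) (hb : b ∈ s) (hab : a ≠ b) :
    (pairGraph n q p).Adj a b := by
  rw [pairGraph, SimpleGraph.fromRel_adj]
  exact ⟨hab, Or.inl ⟨s, Finset.mem_union_left _ hs, ha, hb⟩⟩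

lemma adj_rot (q p : AnnularLS n)
    (hp : p.pairs = q.pairs.image (fun s => s.image (· + 1)))
    {s : Finset (ZMod n)} {a b : ZMod n}
    (hs : s ∈ q.pairs) (ha : a ∈ s) (hb : b ∈ s) (hab : a ≠ b) :
    (pairGraph n q p).Adj (a + 1) (b + 1) := by
  have hmem : s.image (· + 1) ∈ p.pairs := by
    rw [hp]; exact Finset.mem_image_of_mem _ hs
  rw [pairGraph, SimpleGraph.fromRel_adj]
  exact ⟨fun h => hab (by exact add_right_cancel h),
    Or.inl ⟨s.image (· + 1), Finset.mem_union_right _ hmem,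
      Finset.mem_image_of_mem _ ha, Finset.mem_image_of_mem _ hb⟩⟩

lemma pair_other (q : AnnularLS n) {s : Finset (ZMod n)} {a : ZMod n}
    (hs : s ∈ q.pairs) (ha : a ∈ s) :
    ∃ b, b ∈ s ∧ b ≠ a ∧ ∀ z ∈ s, z = a ∨ z = b := by
  obtain ⟨u, v, huv, rfl⟩ := Finset.card_eq_two.mp (q.card_two s hs)
  rcases Finset.mem_insert.mp ha with rfl | h
  · exact ⟨v, by simp, huv.symm, fun z hz => by
      rcases Finset.mem_insert.mp hz with rfl | h2
      · exact Or.inl rfl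
      · exact Or.inr (Finset.mem_singleton.mp h2)⟩
  · obtain rfl := Finset.mem_singleton.mp h
    exact ⟨u, by simp, huv, fun z hz => by
      rcases Finset.mem_insert.mp hz with rfl | h2
      · exact Or.inr rfl
      · exact Or.inl (Finset.mem_singleton.mp h2)⟩

lemma key (q p : AnnularLS n)
    (hp : p.pairs = q.pairs.image (fun s => s.image (· + 1))) :
    ∀ M : ℕ, ∀ x y : ZMod n, 0 < M → (y - x).val = M →
    (∀ t ∈ q.pairs, ∀ k ∈ t, ∀ l ∈ t,
      cyclicBetween n x y k → cyclicBetween n x y l) →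
    (∀ k : ZMod n, cyclicBetween n x y k → ∃ t ∈ q.pairs, k ∈ t) →
    (pairGraph n q p).Reachable y (x + 1) := by
  intro M
  induction M using Nat.strong_induction_on with
  | _ M IH =>
    intro x y hM hval hcl hnd
    have hMn : M < n := hval ▸ ZMod.val_lt _
    have hyx : y = x + (M : ZMod n) := by
      have := eq_add_val x y; rwa [hval] at this
    rcases eq_or_lt_of_le (show 1 ≤ M from hM) with h1 | h2
    · -- M = 1
      have : y = x + 1 := by rw [hyx, ← h1]; norm_num
      rw [this]
    · -- 2 ≤ M
      have hx1 : cyclicBetween n x y (x + 1) :=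
        ⟨1, one_pos, by rw [hval]; omega, by norm_num⟩
      obtain ⟨t, ht, hx1t⟩ := hnd _ hx1
      obtain ⟨l, hlt, hlne, hchar⟩ := pair_other q ht hx1t
      have hlcb : cyclicBetween n x y l := hcl t ht _ hx1t _ hlt hx1
      obtain ⟨m₁, hm₁0, hm₁M, hleq⟩ := hlcb
      rw [hval] at hm₁M
      have hm₁1 : m₁ ≠ 1 := by
        rintro rfl; exact hlne (by rw [hleq]; norm_num)
      have hm₁2 : 2 ≤ m₁ := by omega
      -- subinterval (x+1, l)
      have hval1 : (l - (x + 1)).val = m₁ - 1 := by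
        have h3 : l - (x + 1) = ((m₁ - 1 : ℕ) : ZMod n) := by
          rw [hleq, Nat.cast_sub (by omega)]; push_cast; ring
        rw [h3, ZMod.val_cast_of_lt (by omega)]
      have sub1 : ∀ k, cyclicBetween n (x + 1) l k → cyclicBetween n x y k := by
        rintro k ⟨m', h0', hlt', hkeq⟩
        rw [hval1] at hlt'
        exact ⟨1 + m', by omega, by rw [hval]; omega, by
          rw [hkeq]; push_cast; ring⟩
      have RA : (pairGraph n q p).Reachable l (x + 1 + 1) :=
        IH (m₁ - 1) (by omega) (x + 1) l (by omega) hval1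
          (q.interval_closed t ht _ hx1t _ hlt hlne.symm)
          (fun k hk => hnd k (sub1 k hk))
      -- subinterval (l, y)
      have hval2 : (y - l).val = M - m₁ := by
        have h3 : y - l = ((M - m₁ : ℕ) : ZMod n) := by
          rw [hyx, hleq, Nat.cast_sub hm₁M.le]; ring
        rw [h3, ZMod.val_cast_of_lt (by omega)]
      have sub2 : ∀ k, cyclicBetween n l y k → cyclicBetween n x y k := by
        rintro k ⟨m', h0', hlt', hkeq⟩
        rw [hval2] at hlt'
        exact ⟨m₁ + m', by omega, by rw [hval]; omega, by
          rw [hkeq, hleq]; push_cast; ring⟩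
      have cl2 : ∀ t' ∈ q.pairs, ∀ k ∈ t', ∀ l' ∈ t',
          cyclicBetween n l y k → cyclicBetween n l y l' := by
        intro t' ht' k hk l' hl' hcbk
        obtain ⟨m'', h0'', hlt'', hkeq⟩ := hcbk
        rw [hval2] at hlt''
        have hkxy : cyclicBetween n x y k := sub2 k ⟨m'', h0'', by rw [hval2]; omega, hkeq⟩
        have hl'xy : cyclicBetween n x y l' := hcl t' ht' k hk l' hl' hkxy
        obtain ⟨m₂, hm₂0, hm₂M, hl'eq⟩ := hl'xy
        rw [hval] at hm₂M
        have hkx : k = x + ((m₁ + m'' : ℕ) : ZMod n) := by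
          rw [hkeq, hleq]; push_cast; ring
        have htne : t' ≠ t := by
          rintro rfl
          rcases hchar k hk with h4 | h4
          · have : 1 = m₁ + m'' :=
              cast_inj' (x := x) (a := 1) (b := m₁ + m'') (by omega) (by omega)
                (by rw [← hkx, h4]; norm_num)
            omega
          · have : m₁ = m₁ + m'' :=
              cast_inj' (x := x) (a := m₁) (b := m₁ + m'') (by omega) (by omega)
                (by rw [← hkx, h4, hleq])
            omega
        have hdisj := q.disj t' ht' t ht htne
        have hl'ne1 : l' ≠ x + 1 := by
          rintro rfl
          exact (Finset.disjoint_left.mp hdisj hl') hx1t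
        have hl'nel : l' ≠ l := by
          rintro rfl
          exact (Finset.disjoint_left.mp hdisj hl') hlt
        have hm₂1 : m₂ ≠ 1 := by
          rintro rfl; exact hl'ne1 (by rw [hl'eq]; norm_num)
        have hm₂m₁ : m₂ ≠ m₁ := by
          rintro rfl; exact hl'nel (by rw [hl'eq, hleq])
        have hm₁m₂ : m₁ < m₂ := by
          rcases lt_or_gt_of_ne hm₂m₁ with h4 | h4
          · exfalso
            have hl'in : cyclicBetween n (x + 1) l l' :=
              ⟨m₂ - 1, by omega, by rw [hval1]; omega, by
                rw [hl'eq, Nat.cast_sub (by omega)]; push_cast; ring⟩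
            have hkin := q.interval_closed t ht _ hx1t _ hlt hlne.symm
              t' ht' l' hl' k hk hl'in
            obtain ⟨m₃, h0₃, hlt₃, hkeq₃⟩ := hkin
            rw [hval1] at hlt₃
            have : 1 + m₃ = m₁ + m'' :=
              cast_inj' (x := x) (a := 1 + m₃) (b := m₁ + m'') (by omega) (by omega)
                (by rw [← hkx, hkeq₃]; push_cast; ring)
            omega
          · exact h4
        exact ⟨m₂ - m₁, by omega, by rw [hval2]; omega, by
          rw [hl'eq, hleq, Nat.cast_sub hm₁m₂.le]; ring⟩
      have RB : (pairGraph n q p).Reachable y (l + 1) :=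
        IH (M - m₁) (by omega) l y (by omega) hval2 cl2
          (fun k hk => hnd k (sub2 k hk))
      have e1 : (pairGraph n q p).Adj (l + 1) (x + 1 + 1) :=
        adj_rot q p hp ht hlt hx1t hlne
      have e2 : (pairGraph n q p).Adj l (x + 1) :=
        adj_q q p ht hlt hx1t hlne
      exact RB.trans (e1.reachable.trans (RA.symm.trans e2.reachable))

end Helpers

/-- If `p` is the rotation of the annular link state `q` by one place, then every vertex
`i` either is a defect of `q` or is connected to `i + 1` in the pair graph `Γ(q,p)`. -/
theorem stmt_11 (n : ℕ) [NeZero n] (q p : AnnularLS n)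
    (hp : p.pairs = q.pairs.image (fun s => s.image (· + 1))) :
    ∀ i : ZMod n, i ∈ q.defects ∨ (pairGraph n q p).Reachable i (i + 1) := by
  intro i
  by_cases hd : ∀ s ∈ q.pairs, i ∉ s
  · left
    simp only [AnnularLS.defects, Finset.mem_filter, Finset.mem_univ, true_and]
    exact hd
  · right
    push_neg at hd
    obtain ⟨s, hs, his⟩ := hd
    obtain ⟨j, hjs, hji, _⟩ := pair_other q hs his
    have hij : i ≠ j := hji.symm
    have hvij : 0 < (j - i).val := ZMod.val_pos.mpr (sub_ne_zero.mpr hji)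
    have hvji : 0 < (i - j).val := ZMod.val_pos.mpr (sub_ne_zero.mpr hij)
    rcases q.defects_one_side s hs i his j hjs hij with hside | hside
    · -- all defects in (i, j); interval (j, i) is defect-free
      have hnd : ∀ k : ZMod n, cyclicBetween n j i k → ∃ t ∈ q.pairs, k ∈ t := by
        intro k hk
        by_contra hcon
        push_neg at hcon
        exact cb_not_both hij (hside k (fun t ht => hcon t ht)) hk
      have R := key q p hp ((i - j).val) j i hvji rfl
        (q.interval_closed s hs j hjs i his hji) hnd
      have e1 : (pairGraph n q p).Adj (j + 1) (i + 1) :=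
        adj_rot q p hp hs hjs his hji
      exact R.trans e1.reachable
    · -- all defects in (j, i); interval (i, j) is defect-free
      have hnd : ∀ k : ZMod n, cyclicBetween n i j k → ∃ t ∈ q.pairs, k ∈ t := by
        intro k hk
        by_contra hcon
        push_neg at hcon
        exact cb_not_both hij hk (hside k (fun t ht => hcon t ht))
      have R := key q p hp ((j - i).val) i j hvij rfl
        (q.interval_closed s hs i his j hjs hij) hnd
      have e2 : (pairGraph n q p).Adj i j := adj_q q p hs his hjs hij
      exact e2.reachable.trans R
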